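/- Let S: [0,β] × ℝ^d → ℝ be a symmetric positive-definite kernel (in the sense that the associated Gaussian process exists), let dρ be a complex bounded measure on ℝ of compact support with conj(dρ(α)) = dρ(−α), V ∈ L¹(ℝ^d), λ ∈ ℂ, and Λ ⊂ ℝ^d bounded measurable. Define the n-th moment integral M_n = λⁿ ∫_{[0,β]ⁿ} dτ ∫ dρ(α)₁…dρ(α)ₙ ∫ dρ(α')₁…dρ(α')ₙ ∫_{Λⁿ} dx ∫_{Λⁿ} dy ∏ᵢ V(xᵢ−yᵢ)·exp(−½ ∑_{i≠j} αᵢαⱼ S(τᵢ−τⱼ, xᵢ−xⱼ)) ·exp(−½ ∑_{i≠j} α'ᵢα'ⱼ S(τᵢ−τⱼ, yᵢ−yⱼ))·exp(−½ ∑_{i,j} αᵢα'ⱼ S(τᵢ−τⱼ, xᵢ−yⱼ)). Then |M_n| ≤ |λ|ⁿ·βⁿ·(Var ρ)^{2n}·exp(2n·a²·S(0,0))·‖V‖₁ⁿ·|Λ|ⁿ, where a = sup{|α| : α ∈ supp ρ} and Var ρ is the total variation of ρ. Consequently ∑_n M_n/n! converges absolutely and satisfies the thermodynamic stability bound |∑_n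 M_n/n!| ≤ exp(C·|Λ|) with C = |λ|·β·(Var ρ)²·exp(2a²S(0,0))·‖V‖₁. -/

import Mathlib

open MeasureTheory Real

set_option maxHeartbeats 2000000

lemma pi_restrict_eq {E : Type*} [MeasurableSpace E] (n : ℕ) (μ : Measure E) [SigmaFinite μ]
    (s : Set E) (hs : MeasurableSet s) :
    Measure.pi (fun _ : Fin n => μ.restrict s) =
      (Measure.pi fun _ : Fin n => μ).restrict (Set.pi Set.univ fun _ => s) := by
  refine Measure.pi_eq fun t ht => ?_
  rw [Measure.restrict_apply (MeasurableSet.univ_pi ht), ← Set.pi_inter_distrib,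
    Measure.pi_pi]
  exact Finset.prod_congr rfl fun i _ => (Measure.restrict_apply (ht i)).symm

lemma integral_pi_prod {E : Type*} [MeasurableSpace E] (n : ℕ) (μ : Measure E) [SigmaFinite μ]
    (f : Fin n → E → ℝ) :
    ∫ x : Fin n → E, ∏ i, f i (x i) ∂(Measure.pi fun _ => μ) = ∏ i, ∫ x, f i x ∂μ := by
  letI : MeasureSpace E := ⟨μ⟩
  exact MeasureTheory.integral_fintype_prod_eq_prod f

lemma integrable_pi_prod {E : Type*} [MeasurableSpace E] (n : ℕ) (μ : Measure E) [SigmaFinite μ]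
    (f : Fin n → E → ℝ) (hf : ∀ i, Integrable (f i) μ) :
    Integrable (fun x : Fin n → E => ∏ i, f i (x i)) (Measure.pi fun _ => μ) := by
  letI : MeasureSpace E := ⟨μ⟩
  exact Integrable.fintype_prod hf

lemma ae_pi_abs_le (n : ℕ) (ρ₀ : Measure ℝ) [IsFiniteMeasure ρ₀] {a : ℝ}
    (hsupp : ∀ᵐ α ∂ρ₀, |α| ≤ a) :
    ∀ᵐ α ∂(Measure.pi fun _ : Fin n => ρ₀), ∀ i, |α i| ≤ a := by
  have hnull : ρ₀ {t : ℝ | ¬ |t| ≤ a} = 0 := ae_iff.mp hsupp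
  rw [ae_iff]
  refine measure_mono_null (fun α hα => ?_)
    (measure_iUnion_null (s := fun i => Function.eval i ⁻¹' {t : ℝ | ¬ |t| ≤ a}) fun i => ?_)
  · simp only [Set.mem_setOf_eq, not_forall] at hα
    obtain ⟨i, hi⟩ := hα
    exact Set.mem_iUnion.mpr ⟨i, hi⟩
  · show (Measure.pi fun _ : Fin n => ρ₀) (Function.eval i ⁻¹' {t : ℝ | ¬ |t| ≤ a}) = 0
    rw [Set.eval_preimage, Measure.pi_pi]
    exact Finset.prod_eq_zero (Finset.mem_univ i) (by simpa [not_le] using hnull)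

lemma exponent_bound {d n : ℕ} (S : ℝ → EuclideanSpace ℝ (Fin d) → ℝ)
    (hSsym : ∀ t x, S (-t) (-x) = S t x)
    (hSpd : ∀ (m : ℕ) (τ : Fin m → ℝ) (ξ : Fin m → EuclideanSpace ℝ (Fin d)) (c : Fin m → ℝ),
      0 ≤ ∑ i, ∑ j, c i * c j * S (τ i - τ j) (ξ i - ξ j))
    {a : ℝ} (τ : Fin n → ℝ) (x y : Fin n → EuclideanSpace ℝ (Fin d))
    (α α' : Fin n → ℝ) (hα : ∀ i, |α i| ≤ a) (hα' : ∀ i, |α' i| ≤ a) :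
    (-(1/2) * ∑ i, ∑ j, if i ≠ j then α i * α j * S (τ i - τ j) (x i - x j) else 0)
      + (-(1/2) * ∑ i, ∑ j, if i ≠ j then α' i * α' j * S (τ i - τ j) (y i - y j) else 0)
      + (-(1/2) * ∑ i, ∑ j, α i * α' j * S (τ i - τ j) (x i - y j))
    ≤ 2 * n * a ^ 2 * S 0 0 := by
  have hS00 : 0 ≤ S 0 0 := by
    have := hSpd 1 0 0 1
    simpa using this
  have hA : 0 ≤ ∑ i, ∑ j, α i * α j * S (τ i - τ j) (x i - x j) := hSpd n τ x α
  have hB : 0 ≤ ∑ i, ∑ j, α' i * α' j * S (τ i - τ j) (y i - y j) := hSpd n τ y α'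
  have hQ : 0 ≤ (∑ i, ∑ j, α i * α j * S (τ i - τ j) (x i - x j))
      + (∑ i, ∑ j, α' i * α' j * S (τ i - τ j) (y i - y j))
      + 2 * ∑ i, ∑ j, α i * α' j * S (τ i - τ j) (x i - y j) := by
    have h := hSpd (n + n) (Fin.append τ τ) (Fin.append x y) (Fin.append α α')
    have hC' : ∑ i, ∑ j, α' i * α j * S (τ i - τ j) (y i - x j)
        = ∑ i, ∑ j, α i * α' j * S (τ i - τ j) (x i - y j) := by
      rw [Finset.sum_comm]
      refine Finset.sum_congr rfl fun i _ => Finset.sum_congr rfl fun j _ => ?_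
      have : S (τ j - τ i) (y j - x i) = S (τ i - τ j) (x i - y j) := by
        rw [← hSsym (τ i - τ j) (x i - y j), neg_sub, neg_sub]
      rw [this]; ring
    simp only [Fin.sum_univ_add, Fin.append_left, Fin.append_right,
      Finset.sum_add_distrib] at h
    rw [hC'] at h
    linarith
  have hsplit : ∀ (c : Fin n → ℝ) (ξ : Fin n → EuclideanSpace ℝ (Fin d)),
      (∑ i, ∑ j, if i ≠ j then c i * c j * S (τ i - τ j) (ξ i - ξ j) else 0)
        = (∑ i, ∑ j, c i * c j * S (τ i - τ j) (ξ i - ξ j)) - ∑ i, c i * c i * S 0 0 := by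
    intro c ξ
    rw [← Finset.sum_sub_distrib]
    refine Finset.sum_congr rfl fun i _ => ?_
    have : ∑ j, (if i = j then c i * c j * S (τ i - τ j) (ξ i - ξ j) else 0)
        = c i * c i * S 0 0 := by
      rw [Finset.sum_ite_eq]
      simp
    rw [← this, ← Finset.sum_sub_distrib]
    refine Finset.sum_congr rfl fun j _ => ?_
    by_cases h : i = j <;> simp [h]
  have hDa : ∑ i, α i * α i * S 0 0 ≤ (n : ℝ) * (a ^ 2 * S 0 0) := by
    calc ∑ i, α i * α i * S 0 0 ≤ ∑ _i : Fin n, a ^ 2 * S 0 0 := by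
          refine Finset.sum_le_sum fun i _ => ?_
          have h1 := abs_le.mp (hα i)
          have h2 : α i * α i ≤ a ^ 2 := by nlinarith [h1.1, h1.2]
          exact mul_le_mul_of_nonneg_right h2 hS00
      _ = (n : ℝ) * (a ^ 2 * S 0 0) := by
          rw [Finset.sum_const, Finset.card_univ, Fintype.card_fin, nsmul_eq_mul]
  have hDb : ∑ i, α' i * α' i * S 0 0 ≤ (n : ℝ) * (a ^ 2 * S 0 0) := by
    calc ∑ i, α' i * α' i * S 0 0 ≤ ∑ _i : Fin n, a ^ 2 * S 0 0 := by
          refine Finset.sum_le_sum fun i _ => ?_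
          have h1 := abs_le.mp (hα' i)
          have h2 : α' i * α' i ≤ a ^ 2 := by nlinarith [h1.1, h1.2]
          exact mul_le_mul_of_nonneg_right h2 hS00
      _ = (n : ℝ) * (a ^ 2 * S 0 0) := by
          rw [Finset.sum_const, Finset.card_univ, Fintype.card_fin, nsmul_eq_mul]
  rw [hsplit α x, hsplit α' y]
  have hn : (0:ℝ) ≤ (n:ℝ) * (a ^ 2 * S 0 0) := by positivity
  nlinarith [hQ, hA, hB, hDa, hDb, hn]

/-- Lemma 3.1, nonlocal gentle perturbation: bound on the Gaussian moment
integrals `M_n` of the nonlocal gentle interaction and resulting thermodynamic stability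
bound `|∑ M_n/n!| ≤ exp(C·|Λ|)`.  The complex measure `dρ` is represented as `w·dρ₀` with
`ρ₀` its (finite) total variation measure and `|w| = 1`; `a` bounds the support of `ρ`. -/
theorem stmt13 (d : ℕ) (β : ℝ) (hβ : 0 < β)
    (S : ℝ → EuclideanSpace ℝ (Fin d) → ℝ)
    (hSsym : ∀ t x, S (-t) (-x) = S t x)
    (hSpd : ∀ (n : ℕ) (τ : Fin n → ℝ) (ξ : Fin n → EuclideanSpace ℝ (Fin d)) (c : Fin n → ℝ),
      0 ≤ ∑ i, ∑ j, c i * c j * S (τ i - τ j) (ξ i - ξ j))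
    (ρ₀ : Measure ℝ) [IsFiniteMeasure ρ₀] (w : ℝ → ℂ)
    (hw : ∀ α, ‖w α‖ = 1) (hρsym : Measure.map Neg.neg ρ₀ = ρ₀)
    (hwsym : ∀ α, w (-α) = (starRingEnd ℂ) (w α))
    (a : ℝ) (ha : 0 ≤ a) (hsupp : ∀ᵐ α ∂ρ₀, |α| ≤ a)
    (V : EuclideanSpace ℝ (Fin d) → ℝ) (hV : Integrable V)
    (lam : ℂ) (Λ : Set (EuclideanSpace ℝ (Fin d)))
    (hΛbdd : Bornology.IsBounded Λ) (hΛmeas : MeasurableSet Λ) :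
    let M : ℕ → ℂ := fun n =>
      lam ^ n *
        ∫ τ in Set.pi Set.univ (fun _ : Fin n => Set.Icc (0:ℝ) β),
          (∫ α, (∫ α',
            (∫ x in Set.pi Set.univ (fun _ : Fin n => Λ),
              (∫ y in Set.pi Set.univ (fun _ : Fin n => Λ),
                (∏ i, w (α i)) * (∏ i, w (α' i)) * (∏ i, ((V (x i - y i) : ℝ) : ℂ)) *
                  Complex.exp
                    (((-(1/2) * ∑ i, ∑ j,
                        if i ≠ j then α i * α j * S (τ i - τ j) (x i - x j) else 0)
                      + (-(1/2) * ∑ i, ∑ j,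
                        if i ≠ j then α' i * α' j * S (τ i - τ j) (y i - y j) else 0)
                      + (-(1/2) * ∑ i, ∑ j,
                        α i * α' j * S (τ i - τ j) (x i - y j)) : ℝ) : ℂ)))
            ∂(Measure.pi fun _ : Fin n => ρ₀)) ∂(Measure.pi fun _ : Fin n => ρ₀))
    (∀ n : ℕ, ‖M n‖ ≤ ‖lam‖ ^ n * β ^ n * ((ρ₀ Set.univ).toReal) ^ (2 * n) *
        Real.exp (2 * n * a ^ 2 * S 0 0) * (∫ x, |V x|) ^ n * ((volume Λ).toReal) ^ n) ∧
    (Summable fun n : ℕ => ‖M n‖ / n.factorial) ∧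
    ‖∑' n : ℕ, M n / n.factorial‖ ≤
      Real.exp ((‖lam‖ * β * ((ρ₀ Set.univ).toReal) ^ 2 *
        Real.exp (2 * a ^ 2 * S 0 0) * (∫ x, |V x|)) * (volume Λ).toReal) := by
  intro M
  classical
  have hS00 : 0 ≤ S 0 0 := by simpa using hSpd 1 0 0 1
  have hIV : 0 ≤ ∫ x, |V x| := integral_nonneg fun x => abs_nonneg _
  have hr : 0 ≤ (ρ₀ Set.univ).toReal := ENNReal.toReal_nonneg
  have hL : 0 ≤ (volume Λ).toReal := ENNReal.toReal_nonneg
  haveI hfinΛ : IsFiniteMeasure ((volume : Measure (EuclideanSpace ℝ (Fin d))).restrict Λ) :=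
    ⟨by rw [Measure.restrict_apply_univ]; exact hΛbdd.measure_lt_top⟩
  have key : ∀ n : ℕ, ‖M n‖ ≤ ‖lam‖ ^ n * β ^ n * ((ρ₀ Set.univ).toReal) ^ (2 * n) *
      Real.exp (2 * n * a ^ 2 * S 0 0) * (∫ x, |V x|) ^ n * ((volume Λ).toReal) ^ n := by
    intro n
    set K := Real.exp (2 * (n:ℝ) * a ^ 2 * S 0 0) with hKdef
    have hK : 0 ≤ K := (Real.exp_pos _).le
    have hrwΛ : ((volume : Measure (Fin n → EuclideanSpace ℝ (Fin d)))).restrict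
        (Set.pi Set.univ fun _ : Fin n => Λ)
        = Measure.pi (fun _ : Fin n => volume.restrict Λ) := by
      rw [MeasureTheory.volume_pi]
      exact (pi_restrict_eq n volume Λ hΛmeas).symm
    have hρuniv : ((Measure.pi fun _ : Fin n => ρ₀) Set.univ).toReal
        = ((ρ₀ Set.univ).toReal) ^ n := by
      rw [Measure.pi_univ, Finset.prod_const, Finset.card_univ, Fintype.card_fin,
        ENNReal.toReal_pow]
    have hΛuniv : ((Measure.pi fun _ : Fin n =>
          (volume : Measure (EuclideanSpace ℝ (Fin d))).restrict Λ) Set.univ).toReal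
        = ((volume Λ).toReal) ^ n := by
      rw [Measure.pi_univ]
      simp only [Measure.restrict_apply_univ, Finset.prod_const, Finset.card_univ,
        Fintype.card_fin, ENNReal.toReal_pow]
    have hpt : ∀ (τ αf αf' : Fin n → ℝ) (x y : Fin n → EuclideanSpace ℝ (Fin d)),
        (∀ i, |αf i| ≤ a) → (∀ i, |αf' i| ≤ a) →
        ‖(∏ i, w (αf i)) * (∏ i, w (αf' i)) * (∏ i, ((V (x i - y i) : ℝ) : ℂ)) *
          Complex.exp
            (((-(1/2) * ∑ i, ∑ j,
                if i ≠ j then αf i * αf j * S (τ i - τ j) (x i - x j) else 0)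
              + (-(1/2) * ∑ i, ∑ j,
                if i ≠ j then αf' i * αf' j * S (τ i - τ j) (y i - y j) else 0)
              + (-(1/2) * ∑ i, ∑ j,
                αf i * αf' j * S (τ i - τ j) (x i - y j)) : ℝ) : ℂ)‖
          ≤ K * ∏ i, |V (x i - y i)| := by
      intro τ αf αf' x y hga hga'
      have hE := exponent_bound S hSsym hSpd τ x y αf αf' hga hga'
      rw [norm_mul, norm_mul, norm_mul, norm_prod, norm_prod, norm_prod]
      simp only [hw, Finset.prod_const_one, one_mul]
      rw [Complex.norm_exp]
      simp only [Complex.ofReal_re, Complex.norm_real, Real.norm_eq_abs]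
      rw [mul_comm K]
      exact mul_le_mul (le_refl _) (Real.exp_le_exp.mpr hE)
        (Real.exp_pos _).le (Finset.prod_nonneg fun i _ => abs_nonneg _)
    have h5 : ∀ (τ αf αf' : Fin n → ℝ) (x : Fin n → EuclideanSpace ℝ (Fin d)),
        (∀ i, |αf i| ≤ a) → (∀ i, |αf' i| ≤ a) →
        ‖∫ y,
            (∏ i, w (αf i)) * (∏ i, w (αf' i)) * (∏ i, ((V (x i - y i) : ℝ) : ℂ)) *
              Complex.exp
                (((-(1/2) * ∑ i, ∑ j,
                    if i ≠ j then αf i * αf j * S (τ i - τ j) (x i - x j) else 0)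
                  + (-(1/2) * ∑ i, ∑ j,
                    if i ≠ j then αf' i * αf' j * S (τ i - τ j) (y i - y j) else 0)
                  + (-(1/2) * ∑ i, ∑ j,
                    αf i * αf' j * S (τ i - τ j) (x i - y j)) : ℝ) : ℂ)
            ∂(Measure.pi fun _ : Fin n => volume.restrict Λ)‖
          ≤ K * (∫ x, |V x|) ^ n := by
      intro τ αf αf' x hga hga'
      have hgi : Integrable (fun y : Fin n → EuclideanSpace ℝ (Fin d) =>
          K * ∏ i, |V (x i - y i)|) (Measure.pi fun _ : Fin n => volume.restrict Λ) := by
        apply Integrable.const_mul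
        exact integrable_pi_prod n (volume.restrict Λ) (fun i z => |V (x i - z)|)
          (fun i => ((hV.comp_sub_left (x i)).abs).restrict)
      refine (norm_integral_le_of_norm_le hgi
        (Filter.Eventually.of_forall fun y => hpt τ αf αf' x y hga hga')).trans ?_
      rw [integral_const_mul]
      rw [integral_pi_prod n (volume.restrict Λ) (fun i z => |V (x i - z)|)]
      refine mul_le_mul_of_nonneg_left ?_ hK
      calc ∏ i, ∫ z, |V (x i - z)| ∂(volume.restrict Λ)
          ≤ ∏ _i : Fin n, ∫ z, |V z| := by
            refine Finset.prod_le_prod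
              (fun i _ => integral_nonneg fun z => abs_nonneg _) (fun i _ => ?_)
            have hi : Integrable (fun z => |V (x i - z)|) := (hV.comp_sub_left (x i)).abs
            calc ∫ z, |V (x i - z)| ∂(volume.restrict Λ) ≤ ∫ z, |V (x i - z)| :=
                  setIntegral_le_integral hi
                    (Filter.Eventually.of_forall fun z => abs_nonneg _)
              _ = ∫ z, |V z| := integral_sub_left_eq_self (fun z => |V z|) volume (x i)
        _ = (∫ x, |V x|) ^ n := by
            rw [Finset.prod_const, Finset.card_univ, Fintype.card_fin]
    haveI : IsFiniteMeasure (Measure.pi fun _ : Fin n =>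
        (volume : Measure (EuclideanSpace ℝ (Fin d))).restrict Λ) := inferInstance
    have h4 : ∀ (τ αf αf' : Fin n → ℝ),
        (∀ i, |αf i| ≤ a) → (∀ i, |αf' i| ≤ a) →
        ‖∫ x in Set.pi Set.univ (fun _ : Fin n => Λ),
          (∫ y in Set.pi Set.univ (fun _ : Fin n => Λ),
            (∏ i, w (αf i)) * (∏ i, w (αf' i)) * (∏ i, ((V (x i - y i) : ℝ) : ℂ)) *
              Complex.exp
                (((-(1/2) * ∑ i, ∑ j,
                    if i ≠ j then αf i * αf j * S (τ i - τ j) (x i - x j) else 0)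
                  + (-(1/2) * ∑ i, ∑ j,
                    if i ≠ j then αf' i * αf' j * S (τ i - τ j) (y i - y j) else 0)
                  + (-(1/2) * ∑ i, ∑ j,
                    αf i * αf' j * S (τ i - τ j) (x i - y j)) : ℝ) : ℂ))‖
          ≤ K * (∫ x, |V x|) ^ n * ((volume Λ).toReal) ^ n := by
      intro τ αf αf' hga hga'
      rw [hrwΛ]
      have hb := norm_integral_le_of_norm_le_const
        (μ := Measure.pi fun _ : Fin n =>
          (volume : Measure (EuclideanSpace ℝ (Fin d))).restrict Λ)
        (Filter.Eventually.of_forall fun x => h5 τ αf αf' x hga hga')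
      rw [measureReal_def, hΛuniv] at hb
      exact hb
    have hae : ∀ᵐ αf ∂(Measure.pi fun _ : Fin n => ρ₀), ∀ i, |αf i| ≤ a :=
      ae_pi_abs_le n ρ₀ hsupp
    have h3 : ∀ (τ αf : Fin n → ℝ), (∀ i, |αf i| ≤ a) →
        ‖∫ α', (∫ x in Set.pi Set.univ (fun _ : Fin n => Λ),
          (∫ y in Set.pi Set.univ (fun _ : Fin n => Λ),
            (∏ i, w (αf i)) * (∏ i, w (α' i)) * (∏ i, ((V (x i - y i) : ℝ) : ℂ)) *
              Complex.exp
                (((-(1/2) * ∑ i, ∑ j,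
                    if i ≠ j then αf i * αf j * S (τ i - τ j) (x i - x j) else 0)
                  + (-(1/2) * ∑ i, ∑ j,
                    if i ≠ j then α' i * α' j * S (τ i - τ j) (y i - y j) else 0)
                  + (-(1/2) * ∑ i, ∑ j,
                    αf i * α' j * S (τ i - τ j) (x i - y j)) : ℝ) : ℂ)))
          ∂(Measure.pi fun _ : Fin n => ρ₀)‖
          ≤ K * (∫ x, |V x|) ^ n * ((volume Λ).toReal) ^ n * ((ρ₀ Set.univ).toReal) ^ n := by
      intro τ αf hga
      have hb := norm_integral_le_of_norm_le_const
        (μ := Measure.pi fun _ : Fin n => ρ₀)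
        (hae.mono fun α' hga' => h4 τ αf α' hga hga')
      rw [measureReal_def, hρuniv] at hb
      exact hb
    have h2 : ∀ (τ : Fin n → ℝ),
        ‖∫ α, (∫ α', (∫ x in Set.pi Set.univ (fun _ : Fin n => Λ),
          (∫ y in Set.pi Set.univ (fun _ : Fin n => Λ),
            (∏ i, w (α i)) * (∏ i, w (α' i)) * (∏ i, ((V (x i - y i) : ℝ) : ℂ)) *
              Complex.exp
                (((-(1/2) * ∑ i, ∑ j,
                    if i ≠ j then α i * α j * S (τ i - τ j) (x i - x j) else 0)
                  + (-(1/2) * ∑ i, ∑ j,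
                    if i ≠ j then α' i * α' j * S (τ i - τ j) (y i - y j) else 0)
                  + (-(1/2) * ∑ i, ∑ j,
                    α i * α' j * S (τ i - τ j) (x i - y j)) : ℝ) : ℂ)))
          ∂(Measure.pi fun _ : Fin n => ρ₀)) ∂(Measure.pi fun _ : Fin n => ρ₀)‖
          ≤ K * (∫ x, |V x|) ^ n * ((volume Λ).toReal) ^ n * ((ρ₀ Set.univ).toReal) ^ n *
            ((ρ₀ Set.univ).toReal) ^ n := by
      intro τ
      have hb := norm_integral_le_of_norm_le_const
        (μ := Measure.pi fun _ : Fin n => ρ₀)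
        (hae.mono fun αf hga => h3 τ αf hga)
      rw [measureReal_def, hρuniv] at hb
      exact hb
    haveI : IsFiniteMeasure ((volume : Measure (Fin n → ℝ)).restrict
        (Set.pi Set.univ fun _ : Fin n => Set.Icc (0:ℝ) β)) := by
      constructor
      rw [Measure.restrict_apply_univ, volume_pi, Measure.pi_pi]
      simp only [Real.volume_Icc, sub_zero, Finset.prod_const]
      exact ENNReal.pow_lt_top ENNReal.ofReal_lt_top
    have h1 : ‖∫ τ in Set.pi Set.univ (fun _ : Fin n => Set.Icc (0:ℝ) β),
        (∫ α, (∫ α', (∫ x in Set.pi Set.univ (fun _ : Fin n => Λ),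
          (∫ y in Set.pi Set.univ (fun _ : Fin n => Λ),
            (∏ i, w (α i)) * (∏ i, w (α' i)) * (∏ i, ((V (x i - y i) : ℝ) : ℂ)) *
              Complex.exp
                (((-(1/2) * ∑ i, ∑ j,
                    if i ≠ j then α i * α j * S (τ i - τ j) (x i - x j) else 0)
                  + (-(1/2) * ∑ i, ∑ j,
                    if i ≠ j then α' i * α' j * S (τ i - τ j) (y i - y j) else 0)
                  + (-(1/2) * ∑ i, ∑ j,
                    α i * α' j * S (τ i - τ j) (x i - y j)) : ℝ) : ℂ)))
          ∂(Measure.pi fun _ : Fin n => ρ₀)) ∂(Measure.pi fun _ : Fin n => ρ₀))‖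
          ≤ K * (∫ x, |V x|) ^ n * ((volume Λ).toReal) ^ n * ((ρ₀ Set.univ).toReal) ^ n *
            ((ρ₀ Set.univ).toReal) ^ n * β ^ n := by
      have hτuniv : (((volume : Measure (Fin n → ℝ)).restrict
          (Set.pi Set.univ fun _ : Fin n => Set.Icc (0:ℝ) β)) Set.univ).toReal
          = β ^ n := by
        rw [Measure.restrict_apply_univ, volume_pi, Measure.pi_pi]
        simp only [Real.volume_Icc, sub_zero, Finset.prod_const, Finset.card_univ,
          Fintype.card_fin]
        rw [ENNReal.toReal_pow, ENNReal.toReal_ofReal hβ.le]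
      have hb := norm_integral_le_of_norm_le_const
        (μ := (volume : Measure (Fin n → ℝ)).restrict
          (Set.pi Set.univ fun _ : Fin n => Set.Icc (0:ℝ) β))
        (Filter.Eventually.of_forall fun τ => h2 τ)
      rw [measureReal_def, hτuniv] at hb
      exact hb
    simp only [M]
    rw [norm_mul, norm_pow]
    calc ‖lam‖ ^ n * ‖_‖ ≤ ‖lam‖ ^ n *
        (K * (∫ x, |V x|) ^ n * ((volume Λ).toReal) ^ n * ((ρ₀ Set.univ).toReal) ^ n *
          ((ρ₀ Set.univ).toReal) ^ n * β ^ n) :=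
        mul_le_mul_of_nonneg_left h1 (by positivity)
      _ = ‖lam‖ ^ n * β ^ n * ((ρ₀ Set.univ).toReal) ^ (2 * n) * K *
          (∫ x, |V x|) ^ n * ((volume Λ).toReal) ^ n := by
        rw [two_mul, pow_add]; ring
  set D : ℝ := (‖lam‖ * β * ((ρ₀ Set.univ).toReal) ^ 2 *
      Real.exp (2 * a ^ 2 * S 0 0) * (∫ x, |V x|)) * (volume Λ).toReal with hDdef
  have hMD : ∀ n : ℕ, ‖M n‖ ≤ D ^ n := by
    intro n
    refine (key n).trans (le_of_eq ?_)
    rw [hDdef]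
    have hexp : Real.exp (2 * (n:ℝ) * a ^ 2 * S 0 0)
        = (Real.exp (2 * a ^ 2 * S 0 0)) ^ n := by
      rw [← Real.exp_nat_mul]
      congr 1
      push_cast
      ring
    rw [hexp, two_mul, pow_add]
    ring
  have hsumD : Summable fun n : ℕ => D ^ n / n.factorial :=
    Real.summable_pow_div_factorial D
  have hsumM : Summable fun n : ℕ => ‖M n‖ / n.factorial := by
    refine Summable.of_nonneg_of_le (fun n => by positivity) (fun n => ?_) hsumD
    exact div_le_div_of_nonneg_right (hMD n) (by positivity)
  refine ⟨key, hsumM, ?_⟩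
  have hnorm_eq : ∀ n : ℕ, ‖M n / (n.factorial : ℂ)‖ = ‖M n‖ / n.factorial := by
    intro n
    rw [norm_div]
    congr 1
    simp [Complex.norm_natCast]
  have hsumM' : Summable fun n : ℕ => ‖M n / (n.factorial : ℂ)‖ := by
    simpa only [hnorm_eq] using hsumM
  calc ‖∑' n : ℕ, M n / n.factorial‖ ≤ ∑' n : ℕ, ‖M n / (n.factorial : ℂ)‖ :=
        norm_tsum_le_tsum_norm hsumM'
    _ = ∑' n : ℕ, ‖M n‖ / n.factorial := tsum_congr hnorm_eq
    _ ≤ ∑' n : ℕ, D ^ n / n.factorial := by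
        refine Summable.tsum_le_tsum (fun n => ?_) hsumM hsumD
        exact div_le_div_of_nonneg_right (hMD n) (by positivity)
    _ = Real.exp D := by
        rw [Real.exp_eq_exp_ℝ, NormedSpace.exp_eq_tsum_div]
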